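/- arXiv:1108.2403 — 6 statements merged into one kernel-verified Lean document; each statement's English description precedes it below -/
import Mathlib

section
/- If G and H are finitely L-presented groups, then the free product G * H is finitely L-presented. If moreover both G and H are invariantly finitely L-presented, then G * H is invariantly finitely L-presented. -/
/-- The kernel of a finite `L`-presentation: the normal closure in the free group of
`Q ∪ ⋃_{σ ∈ Φ*} σ(R)`, where `Φ*` is the submonoid of `End(F)` generated by `Φ`. -/
def lpresKernel {X : Type} (Q R : Set (FreeGroup X))
    (Φ : Set (Monoid.End (FreeGroup X))) : Subgroup (FreeGroup X) :=
  Subgroup.normalClosure (Q ∪ ⋃ σ ∈ Submonoid.closure Φ, ⇑σ '' R)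

instance lpresKernel_normal {X : Type} (Q R : Set (FreeGroup X))
    (Φ : Set (Monoid.End (FreeGroup X))) : (lpresKernel Q R Φ).Normal :=
  Subgroup.normalClosure_normal

namespace LPresAux

open FreeGroup

/-- maps normal closure into normal closure of image -/
lemma mem_ncl_image {G H : Type*} [Group G] [Group H] (f : G →* H) {S : Set G} {g : G}
    (hg : g ∈ Subgroup.normalClosure S) : f g ∈ Subgroup.normalClosure (f '' S) := by
  have h : Subgroup.normalClosure S ≤ (Subgroup.normalClosure (f '' S)).comap f :=
    Subgroup.normalClosure_le_normal (fun x hx => by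
      simp only [Set.mem_preimage, SetLike.mem_coe, Subgroup.mem_comap]
      exact Subgroup.subset_normalClosure (Set.mem_image_of_mem f hx))
  exact h hg

variable (n m : ℕ)

def inc1 : FreeGroup (Fin n) →* FreeGroup (Fin (n + m)) :=
  FreeGroup.lift fun j => FreeGroup.of (Fin.castAdd m j)

def inc2 : FreeGroup (Fin m) →* FreeGroup (Fin (n + m)) :=
  FreeGroup.lift fun j => FreeGroup.of (Fin.natAdd n j)

@[simp] lemma inc1_of (j : Fin n) : inc1 n m (.of j) = .of (Fin.castAdd m j) := lift_apply_of
@[simp] lemma inc2_of (j : Fin m) : inc2 n m (.of j) = .of (Fin.natAdd n j) := lift_apply_of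

def ext1 (σ : Monoid.End (FreeGroup (Fin n))) : Monoid.End (FreeGroup (Fin (n + m))) :=
  FreeGroup.lift (Fin.addCases (fun j => inc1 n m (σ (.of j)))
    (fun j => FreeGroup.of (Fin.natAdd n j)))

def ext2 (τ : Monoid.End (FreeGroup (Fin m))) : Monoid.End (FreeGroup (Fin (n + m))) :=
  FreeGroup.lift (Fin.addCases (fun j => FreeGroup.of (Fin.castAdd m j))
    (fun j => inc2 n m (τ (.of j))))

lemma ext1_inc1 (σ) (a : FreeGroup (Fin n)) : ext1 n m σ (inc1 n m a) = inc1 n m (σ a) := by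
  have h : (MonoidHom.comp (ext1 n m σ) (inc1 n m)) = (inc1 n m).comp (σ : _ →* _) := by
    apply FreeGroup.ext_hom; intro j
    simp [ext1, inc1, lift_apply_of]; rfl
  exact DFunLike.congr_fun h a

lemma ext1_inc2 (σ) (b : FreeGroup (Fin m)) : ext1 n m σ (inc2 n m b) = inc2 n m b := by
  have h : (MonoidHom.comp (ext1 n m σ) (inc2 n m)) = inc2 n m := by
    apply FreeGroup.ext_hom; intro j
    simp [ext1, inc2, lift_apply_of]
  exact DFunLike.congr_fun h b

lemma ext2_inc2 (τ) (b : FreeGroup (Fin m)) : ext2 n m τ (inc2 n m b) = inc2 n m (τ b) := by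
  have h : (MonoidHom.comp (ext2 n m τ) (inc2 n m)) = (inc2 n m).comp (τ : _ →* _) := by
    apply FreeGroup.ext_hom; intro j
    simp [ext2, inc2, lift_apply_of]; rfl
  exact DFunLike.congr_fun h b

lemma ext2_inc1 (τ) (a : FreeGroup (Fin n)) : ext2 n m τ (inc1 n m a) = inc1 n m a := by
  have h : (MonoidHom.comp (ext2 n m τ) (inc1 n m)) = inc1 n m := by
    apply FreeGroup.ext_hom; intro j
    simp [ext2, inc1, lift_apply_of]
  exact DFunLike.congr_fun h a

variable {n m}

section closure

variable (Φ₁ : Set (Monoid.End (FreeGroup (Fin n)))) (Φ₂ : Set (Monoid.End (FreeGroup (Fin m))))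

/-- Every element of the closure of the combined endomorphism set acts blockwise. -/
lemma closure_split {σ} (hσ : σ ∈ Submonoid.closure (ext1 n m '' Φ₁ ∪ ext2 n m '' Φ₂)) :
    ∃ ρ₁ ∈ Submonoid.closure Φ₁, ∃ ρ₂ ∈ Submonoid.closure Φ₂,
      (∀ a, σ (inc1 n m a) = inc1 n m (ρ₁ a)) ∧ (∀ b, σ (inc2 n m b) = inc2 n m (ρ₂ b)) := by
  induction hσ using Submonoid.closure_induction with
  | mem x hx =>
    rcases hx with ⟨σ₀, hσ₀, rfl⟩ | ⟨τ₀, hτ₀, rfl⟩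
    · exact ⟨σ₀, Submonoid.subset_closure hσ₀, 1, one_mem _,
        fun a => ext1_inc1 n m σ₀ a, fun b => ext1_inc2 n m σ₀ b⟩
    · exact ⟨1, one_mem _, τ₀, Submonoid.subset_closure hτ₀,
        fun a => ext2_inc1 n m τ₀ a, fun b => ext2_inc2 n m τ₀ b⟩
  | one => exact ⟨1, one_mem _, 1, one_mem _, fun a => rfl, fun b => rfl⟩
  | mul x y hx hy ihx ihy =>
    obtain ⟨ρ₁, hρ₁, ρ₂, hρ₂, h1, h2⟩ := ihx
    obtain ⟨π₁, hπ₁, π₂, hπ₂, g1, g2⟩ := ihy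
    refine ⟨ρ₁ * π₁, mul_mem hρ₁ hπ₁, ρ₂ * π₂, mul_mem hρ₂ hπ₂, fun a => ?_, fun b => ?_⟩
    · show x (y (inc1 n m a)) = _
      rw [g1, h1]; rfl
    · show x (y (inc2 n m b)) = _
      rw [g2, h2]; rfl

lemma closure_lift1 {ρ} (hρ : ρ ∈ Submonoid.closure Φ₁) :
    ∃ σ ∈ Submonoid.closure (ext1 n m '' Φ₁ ∪ ext2 n m '' Φ₂),
      ∀ a, σ (inc1 n m a) = inc1 n m (ρ a) := by
  induction hρ using Submonoid.closure_induction with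
  | mem x hx =>
    exact ⟨ext1 n m x, Submonoid.subset_closure (Or.inl ⟨x, hx, rfl⟩), ext1_inc1 n m x⟩
  | one => exact ⟨1, one_mem _, fun a => rfl⟩
  | mul x y hx hy ihx ihy =>
    obtain ⟨σ, hσ, h1⟩ := ihx
    obtain ⟨τ, hτ, h2⟩ := ihy
    refine ⟨σ * τ, mul_mem hσ hτ, fun a => ?_⟩
    show σ (τ (inc1 n m a)) = _
    rw [h2, h1]; rfl

lemma closure_lift2 {ρ} (hρ : ρ ∈ Submonoid.closure Φ₂) :
    ∃ σ ∈ Submonoid.closure (ext1 n m '' Φ₁ ∪ ext2 n m '' Φ₂),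
      ∀ b, σ (inc2 n m b) = inc2 n m (ρ b) := by
  induction hρ using Submonoid.closure_induction with
  | mem x hx =>
    exact ⟨ext2 n m x, Submonoid.subset_closure (Or.inr ⟨x, hx, rfl⟩), ext2_inc2 n m x⟩
  | one => exact ⟨1, one_mem _, fun b => rfl⟩
  | mul x y hx hy ihx ihy =>
    obtain ⟨σ, hσ, h1⟩ := ihx
    obtain ⟨τ, hτ, h2⟩ := ihy
    refine ⟨σ * τ, mul_mem hσ hτ, fun b => ?_⟩
    show σ (τ (inc2 n m b)) = _
    rw [h2, h1]; rfl

end closure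

/-- The generating set of an `L`-presentation kernel. -/
def lset {X : Type} (Q R : Set (FreeGroup X)) (Φ : Set (Monoid.End (FreeGroup X))) :
    Set (FreeGroup X) :=
  Q ∪ ⋃ σ ∈ Submonoid.closure Φ, ⇑σ '' R

lemma lpresKernel_eq_ncl {X : Type} (Q R : Set (FreeGroup X)) (Φ : Set (Monoid.End (FreeGroup X))) :
    lpresKernel Q R Φ = Subgroup.normalClosure (lset Q R Φ) := rfl

lemma lset_subset {X : Type} (Q R : Set (FreeGroup X)) (Φ) :
    lset Q R Φ ⊆ lpresKernel Q R Φ := Subgroup.subset_normalClosure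

section key

variable (Q₁ R₁ : Set (FreeGroup (Fin n))) (Φ₁ : Set (Monoid.End (FreeGroup (Fin n))))
variable (Q₂ R₂ : Set (FreeGroup (Fin m))) (Φ₂ : Set (Monoid.End (FreeGroup (Fin m))))

lemma key_eq :
    lpresKernel (inc1 n m '' Q₁ ∪ inc2 n m '' Q₂) (inc1 n m '' R₁ ∪ inc2 n m '' R₂)
        (ext1 n m '' Φ₁ ∪ ext2 n m '' Φ₂)
      = Subgroup.normalClosure (inc1 n m '' lset Q₁ R₁ Φ₁ ∪ inc2 n m '' lset Q₂ R₂ Φ₂) := by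
  apply le_antisymm
  · rw [lpresKernel_eq_ncl]
    apply Subgroup.normalClosure_le_normal
    rintro x (hx | hx)
    · rcases hx with ⟨q, hq, rfl⟩ | ⟨q, hq, rfl⟩
      · exact Subgroup.subset_normalClosure (Or.inl ⟨q, Or.inl hq, rfl⟩)
      · exact Subgroup.subset_normalClosure (Or.inr ⟨q, Or.inl hq, rfl⟩)
    · simp only [Set.mem_iUnion] at hx
      obtain ⟨σ, hσ, r, hr, rfl⟩ := hx
      obtain ⟨ρ₁, hρ₁, ρ₂, hρ₂, h1, h2⟩ := closure_split Φ₁ Φ₂ hσ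
      rcases hr with ⟨r₁, hr₁, rfl⟩ | ⟨r₂, hr₂, rfl⟩
      · rw [h1]
        refine Subgroup.subset_normalClosure (Or.inl ⟨ρ₁ r₁, Or.inr ?_, rfl⟩)
        simp only [Set.mem_iUnion]
        exact ⟨ρ₁, hρ₁, r₁, hr₁, rfl⟩
      · rw [h2]
        refine Subgroup.subset_normalClosure (Or.inr ⟨ρ₂ r₂, Or.inr ?_, rfl⟩)
        simp only [Set.mem_iUnion]
        exact ⟨ρ₂, hρ₂, r₂, hr₂, rfl⟩
  · apply Subgroup.normalClosure_le_normal
    rintro x (⟨a, ha, rfl⟩ | ⟨b, hb, rfl⟩)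
    · rcases ha with ha | ha
      · exact Subgroup.subset_normalClosure (Or.inl (Or.inl ⟨a, ha, rfl⟩))
      · simp only [Set.mem_iUnion] at ha
        obtain ⟨ρ, hρ, r, hr, rfl⟩ := ha
        obtain ⟨σ, hσ, h1⟩ := closure_lift1 Φ₁ Φ₂ hρ
        rw [← h1]
        refine Subgroup.subset_normalClosure (Or.inr ?_)
        simp only [Set.mem_iUnion]
        exact ⟨σ, hσ, inc1 n m r, Or.inl ⟨r, hr, rfl⟩, rfl⟩
    · rcases hb with hb | hb
      · exact Subgroup.subset_normalClosure (Or.inl (Or.inr ⟨b, hb, rfl⟩))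
      · simp only [Set.mem_iUnion] at hb
        obtain ⟨ρ, hρ, r, hr, rfl⟩ := hb
        obtain ⟨σ, hσ, h2⟩ := closure_lift2 Φ₁ Φ₂ hρ
        rw [← h2]
        refine Subgroup.subset_normalClosure (Or.inr ?_)
        simp only [Set.mem_iUnion]
        exact ⟨σ, hσ, inc2 n m r, Or.inr ⟨r, hr, rfl⟩, rfl⟩

end key

section iso

variable (S₁ : Set (FreeGroup (Fin n))) (S₂ : Set (FreeGroup (Fin m)))

def bigN : Subgroup (FreeGroup (Fin (n + m))) :=
  Subgroup.normalClosure (inc1 n m '' S₁ ∪ inc2 n m '' S₂)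

instance : (bigN S₁ S₂).Normal := Subgroup.normalClosure_normal

def toCoprod : FreeGroup (Fin (n + m)) →*
    Monoid.Coprod (FreeGroup (Fin n) ⧸ Subgroup.normalClosure S₁) (FreeGroup (Fin m) ⧸ Subgroup.normalClosure S₂) :=
  FreeGroup.lift (Fin.addCases
    (fun j => Monoid.Coprod.inl (QuotientGroup.mk (FreeGroup.of j)))
    (fun j => Monoid.Coprod.inr (QuotientGroup.mk (FreeGroup.of j))))

lemma bigN_le_ker : bigN S₁ S₂ ≤ (toCoprod S₁ S₂).ker := by
  apply Subgroup.normalClosure_le_normal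
  rintro x (⟨a, ha, rfl⟩ | ⟨b, hb, rfl⟩)
  · have h : (toCoprod S₁ S₂).comp (inc1 n m)
        = (Monoid.Coprod.inl).comp (QuotientGroup.mk' (Subgroup.normalClosure S₁)) := by
      apply FreeGroup.ext_hom; intro j
      simp [toCoprod, inc1, lift_apply_of]
    have := DFunLike.congr_fun h a
    simp only [MonoidHom.comp_apply] at this
    simp only [SetLike.mem_coe, MonoidHom.mem_ker, this]
    have ha1 : (QuotientGroup.mk' (Subgroup.normalClosure S₁)) a = 1 := by
      rw [QuotientGroup.mk'_apply, QuotientGroup.eq_one_iff]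
      exact Subgroup.subset_normalClosure ha
    rw [ha1]; exact _root_.map_one _
  · have h : (toCoprod S₁ S₂).comp (inc2 n m)
        = (Monoid.Coprod.inr).comp (QuotientGroup.mk' (Subgroup.normalClosure S₂)) := by
      apply FreeGroup.ext_hom; intro j
      simp [toCoprod, inc2, lift_apply_of]
    have := DFunLike.congr_fun h b
    simp only [MonoidHom.comp_apply] at this
    simp only [SetLike.mem_coe, MonoidHom.mem_ker, this]
    have hb1 : (QuotientGroup.mk' (Subgroup.normalClosure S₂)) b = 1 := by
      rw [QuotientGroup.mk'_apply, QuotientGroup.eq_one_iff]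
      exact Subgroup.subset_normalClosure hb
    rw [hb1]; exact _root_.map_one _

def phi : FreeGroup (Fin (n + m)) ⧸ bigN S₁ S₂ →*
    Monoid.Coprod (FreeGroup (Fin n) ⧸ Subgroup.normalClosure S₁) (FreeGroup (Fin m) ⧸ Subgroup.normalClosure S₂) :=
  QuotientGroup.lift _ (toCoprod S₁ S₂) (fun g hg => (bigN_le_ker S₁ S₂) hg)

def psi1 : FreeGroup (Fin n) ⧸ Subgroup.normalClosure S₁ →* FreeGroup (Fin (n + m)) ⧸ bigN S₁ S₂ :=
  QuotientGroup.lift _ ((QuotientGroup.mk' (bigN S₁ S₂)).comp (inc1 n m)) (by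
    intro g hg
    have h : inc1 n m g ∈ bigN S₁ S₂ :=
      Subgroup.normalClosure_mono (Set.subset_union_left) (mem_ncl_image (inc1 n m) hg)
    show (QuotientGroup.mk' (bigN S₁ S₂)) (inc1 n m g) = 1
    rw [QuotientGroup.mk'_apply, QuotientGroup.eq_one_iff]
    exact h)

def psi2 : FreeGroup (Fin m) ⧸ Subgroup.normalClosure S₂ →* FreeGroup (Fin (n + m)) ⧸ bigN S₁ S₂ :=
  QuotientGroup.lift _ ((QuotientGroup.mk' (bigN S₁ S₂)).comp (inc2 n m)) (by
    intro g hg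
    have h : inc2 n m g ∈ bigN S₁ S₂ :=
      Subgroup.normalClosure_mono (Set.subset_union_right) (mem_ncl_image (inc2 n m) hg)
    show (QuotientGroup.mk' (bigN S₁ S₂)) (inc2 n m g) = 1
    rw [QuotientGroup.mk'_apply, QuotientGroup.eq_one_iff]
    exact h)

def psi : Monoid.Coprod (FreeGroup (Fin n) ⧸ Subgroup.normalClosure S₁)
      (FreeGroup (Fin m) ⧸ Subgroup.normalClosure S₂) →* FreeGroup (Fin (n + m)) ⧸ bigN S₁ S₂ :=
  Monoid.Coprod.lift (psi1 S₁ S₂) (psi2 S₁ S₂)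

noncomputable def quotEquivCoprod :
    (FreeGroup (Fin (n + m)) ⧸ bigN S₁ S₂) ≃*
      Monoid.Coprod (FreeGroup (Fin n) ⧸ Subgroup.normalClosure S₁)
        (FreeGroup (Fin m) ⧸ Subgroup.normalClosure S₂) := by
  refine MonoidHom.toMulEquiv (phi S₁ S₂) (psi S₁ S₂) ?_ ?_
  · apply QuotientGroup.monoidHom_ext
    apply FreeGroup.ext_hom; intro i
    induction i using Fin.addCases with
    | left j =>
      simp [phi, psi, psi1, toCoprod, lift_apply_of, inc1, Fin.addCases_left]
    | right j =>
      simp [phi, psi, psi2, toCoprod, lift_apply_of, inc2, Fin.addCases_right]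
  · apply Monoid.Coprod.hom_ext
    · apply QuotientGroup.monoidHom_ext
      apply FreeGroup.ext_hom; intro j
      simp [phi, psi, psi1, toCoprod, lift_apply_of, inc1, Fin.addCases_left]
    · apply QuotientGroup.monoidHom_ext
      apply FreeGroup.ext_hom; intro j
      simp [phi, psi, psi2, toCoprod, lift_apply_of, inc2, Fin.addCases_right]

end iso

/-- Congruence of coproducts. -/
def coprodCongr {G G' H H' : Type*} [Group G] [Group G'] [Group H] [Group H']
    (e₁ : G ≃* G') (e₂ : H ≃* H') : Monoid.Coprod G H ≃* Monoid.Coprod G' H' := by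
  refine MonoidHom.toMulEquiv
    (Monoid.Coprod.map e₁.toMonoidHom e₂.toMonoidHom)
    (Monoid.Coprod.map e₁.symm.toMonoidHom e₂.symm.toMonoidHom) ?_ ?_
  · apply Monoid.Coprod.hom_ext <;>
      · apply MonoidHom.ext; intro x
        simp [Monoid.Coprod.map_apply_inl, Monoid.Coprod.map_apply_inr]
  · apply Monoid.Coprod.hom_ext <;>
      · apply MonoidHom.ext; intro x
        simp [Monoid.Coprod.map_apply_inl, Monoid.Coprod.map_apply_inr]

end LPresAux

section assemble

open LPresAux

variable {G H : Type*} [Group G] [Group H]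

/-- The master construction: given L-presentations of `G` and `H`, produce the combined
L-presentation data of the coproduct, with the kernel description. -/
lemma combined (n m : ℕ)
    (Q₁ R₁ : Finset (FreeGroup (Fin n))) (Φ₁ : Finset (Monoid.End (FreeGroup (Fin n))))
    (Q₂ R₂ : Finset (FreeGroup (Fin m))) (Φ₂ : Finset (Monoid.End (FreeGroup (Fin m))))
    (eG : G ≃* FreeGroup (Fin n) ⧸ lpresKernel (Q₁ : Set _) (R₁ : Set _) (Φ₁ : Set _))
    (eH : H ≃* FreeGroup (Fin m) ⧸ lpresKernel (Q₂ : Set _) (R₂ : Set _) (Φ₂ : Set _)) :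
    ∃ (Q R : Finset (FreeGroup (Fin (n + m))))
      (Φ : Finset (Monoid.End (FreeGroup (Fin (n + m))))),
      (Q : Set _) = inc1 n m '' (Q₁ : Set _) ∪ inc2 n m '' (Q₂ : Set _) ∧
      (R : Set _) = inc1 n m '' (R₁ : Set _) ∪ inc2 n m '' (R₂ : Set _) ∧
      (Φ : Set _) = ext1 n m '' (Φ₁ : Set _) ∪ ext2 n m '' (Φ₂ : Set _) ∧
      Nonempty (Monoid.Coprod G H ≃*
        FreeGroup (Fin (n + m)) ⧸ lpresKernel (Q : Set _) (R : Set _) (Φ : Set _)) := by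
  classical
  refine ⟨Q₁.image (inc1 n m) ∪ Q₂.image (inc2 n m),
    R₁.image (inc1 n m) ∪ R₂.image (inc2 n m),
    Φ₁.image (ext1 n m) ∪ Φ₂.image (ext2 n m), by simp, by simp, by simp, ?_⟩
  have hker : lpresKernel ((Q₁.image (inc1 n m) ∪ Q₂.image (inc2 n m) : Finset _) : Set _)
      ((R₁.image (inc1 n m) ∪ R₂.image (inc2 n m) : Finset _) : Set _)
      ((Φ₁.image (ext1 n m) ∪ Φ₂.image (ext2 n m) : Finset _) : Set _)
      = bigN (lset (Q₁ : Set (FreeGroup (Fin n))) (R₁ : Set _) (Φ₁ : Set (Monoid.End (FreeGroup (Fin n)))))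
          (lset (Q₂ : Set (FreeGroup (Fin m))) (R₂ : Set _) (Φ₂ : Set (Monoid.End (FreeGroup (Fin m))))) := by
    have h1 : ((Q₁.image (inc1 n m) ∪ Q₂.image (inc2 n m) : Finset _) : Set _)
        = inc1 n m '' (Q₁ : Set _) ∪ inc2 n m '' (Q₂ : Set _) := by simp
    have h2 : ((R₁.image (inc1 n m) ∪ R₂.image (inc2 n m) : Finset _) : Set _)
        = inc1 n m '' (R₁ : Set _) ∪ inc2 n m '' (R₂ : Set _) := by simp
    have h3 : ((Φ₁.image (ext1 n m) ∪ Φ₂.image (ext2 n m) : Finset _) : Set _)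
        = ext1 n m '' (Φ₁ : Set _) ∪ ext2 n m '' (Φ₂ : Set _) := by simp
    rw [h1, h2, h3, key_eq]
    rfl
  refine ⟨?_⟩
  have hk1 : lpresKernel (Q₁ : Set _) (R₁ : Set _) (Φ₁ : Set _)
      = Subgroup.normalClosure (lset (Q₁ : Set (FreeGroup (Fin n))) (R₁ : Set _)
          (Φ₁ : Set (Monoid.End (FreeGroup (Fin n))))) := rfl
  have hk2 : lpresKernel (Q₂ : Set _) (R₂ : Set _) (Φ₂ : Set _)
      = Subgroup.normalClosure (lset (Q₂ : Set (FreeGroup (Fin m))) (R₂ : Set _)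
          (Φ₂ : Set (Monoid.End (FreeGroup (Fin m))))) := rfl
  exact (coprodCongr (eG.trans (QuotientGroup.quotientMulEquivOfEq hk1))
      (eH.trans (QuotientGroup.quotientMulEquivOfEq hk2))).trans
    (((quotEquivCoprod _ _).symm).trans (QuotientGroup.quotientMulEquivOfEq hker.symm))

lemma combined_invariant (n m : ℕ)
    (Q₁ R₁ : Finset (FreeGroup (Fin n))) (Φ₁ : Finset (Monoid.End (FreeGroup (Fin n))))
    (Q₂ R₂ : Finset (FreeGroup (Fin m))) (Φ₂ : Finset (Monoid.End (FreeGroup (Fin m))))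
    (hinv1 : ∀ σ ∈ Φ₁, ∀ g ∈ lpresKernel (Q₁ : Set _) (R₁ : Set _) (Φ₁ : Set _),
        σ g ∈ lpresKernel (Q₁ : Set _) (R₁ : Set _) (Φ₁ : Set _))
    (hinv2 : ∀ σ ∈ Φ₂, ∀ g ∈ lpresKernel (Q₂ : Set _) (R₂ : Set _) (Φ₂ : Set _),
        σ g ∈ lpresKernel (Q₂ : Set _) (R₂ : Set _) (Φ₂ : Set _))
    (Q R : Finset (FreeGroup (Fin (n + m)))) (Φ : Finset (Monoid.End (FreeGroup (Fin (n + m)))))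
    (hQ : (Q : Set _) = inc1 n m '' (Q₁ : Set _) ∪ inc2 n m '' (Q₂ : Set _))
    (hR : (R : Set _) = inc1 n m '' (R₁ : Set _) ∪ inc2 n m '' (R₂ : Set _))
    (hΦ : (Φ : Set _) = ext1 n m '' (Φ₁ : Set _) ∪ ext2 n m '' (Φ₂ : Set _)) :
    ∀ σ ∈ Φ, ∀ g ∈ lpresKernel (Q : Set _) (R : Set _) (Φ : Set _),
      σ g ∈ lpresKernel (Q : Set _) (R : Set _) (Φ : Set _) := by
  intro σ hσ g hg
  set L₁ := lset (Q₁ : Set (FreeGroup (Fin n))) (R₁ : Set _)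
    (Φ₁ : Set (Monoid.End (FreeGroup (Fin n)))) with hL₁
  set L₂ := lset (Q₂ : Set (FreeGroup (Fin m))) (R₂ : Set _)
    (Φ₂ : Set (Monoid.End (FreeGroup (Fin m)))) with hL₂
  have hker : lpresKernel (Q : Set _) (R : Set _) (Φ : Set _)
      = Subgroup.normalClosure (inc1 n m '' L₁ ∪ inc2 n m '' L₂) := by
    rw [hQ, hR, hΦ, key_eq]
  rw [hker] at hg ⊢
  have hsub : ⇑σ '' (inc1 n m '' L₁ ∪ inc2 n m '' L₂)
      ⊆ Subgroup.normalClosure (inc1 n m '' L₁ ∪ inc2 n m '' L₂) := by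
    have hσ' : σ ∈ ext1 n m '' (Φ₁ : Set _) ∪ ext2 n m '' (Φ₂ : Set _) := by
      rw [← hΦ]; exact_mod_cast hσ
    rintro x ⟨y, (⟨a, ha, rfl⟩ | ⟨b, hb, rfl⟩), rfl⟩
    · rcases hσ' with ⟨σ₀, hσ₀, rfl⟩ | ⟨τ₀, hτ₀, rfl⟩
      · rw [ext1_inc1]
        have ha' : σ₀ a ∈ Subgroup.normalClosure L₁ := by
          have : a ∈ lpresKernel (Q₁ : Set _) (R₁ : Set _) (Φ₁ : Set _) :=
            Subgroup.subset_normalClosure ha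
          exact hinv1 σ₀ hσ₀ a this
        exact Subgroup.normalClosure_mono Set.subset_union_left
          (mem_ncl_image (inc1 n m) ha')
      · rw [ext2_inc1]
        exact Subgroup.subset_normalClosure (Or.inl ⟨a, ha, rfl⟩)
    · rcases hσ' with ⟨σ₀, hσ₀, rfl⟩ | ⟨τ₀, hτ₀, rfl⟩
      · rw [ext1_inc2]
        exact Subgroup.subset_normalClosure (Or.inr ⟨b, hb, rfl⟩)
      · rw [ext2_inc2]
        have hb' : τ₀ b ∈ Subgroup.normalClosure L₂ := by
          have : b ∈ lpresKernel (Q₂ : Set _) (R₂ : Set _) (Φ₂ : Set _) :=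
            Subgroup.subset_normalClosure hb
          exact hinv2 τ₀ hτ₀ b this
        exact Subgroup.normalClosure_mono Set.subset_union_right
          (mem_ncl_image (inc2 n m) hb')
  exact Subgroup.normalClosure_le_normal hsub (mem_ncl_image (σ : _ →* _) hg)

end assemble

/-- A group is finitely `L`-presented if it is isomorphic to the group presented by a
finite `L`-presentation `(X, Q, Φ, R)`. -/
def IsFinitelyLPresented (G : Type*) [Group G] : Prop :=
  ∃ (n : ℕ) (Q R : Finset (FreeGroup (Fin n)))
    (Φ : Finset (Monoid.End (FreeGroup (Fin n)))),
    Nonempty (G ≃* FreeGroup (Fin n) ⧸ lpresKernel (Q : Set _) (R : Set _) (Φ : Set _))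

/-- A group is invariantly finitely `L`-presented if it admits a finite `L`-presentation
`(X, Q, Φ, R)` such that each `σ ∈ Φ` leaves the kernel `N` invariant. -/
def IsInvariantlyFinitelyLPresented (G : Type*) [Group G] : Prop :=
  ∃ (n : ℕ) (Q R : Finset (FreeGroup (Fin n)))
    (Φ : Finset (Monoid.End (FreeGroup (Fin n)))),
    (∀ σ ∈ Φ, ∀ g ∈ lpresKernel (Q : Set _) (R : Set _) (Φ : Set _),
        σ g ∈ lpresKernel (Q : Set _) (R : Set _) (Φ : Set _)) ∧
    Nonempty (G ≃* FreeGroup (Fin n) ⧸ lpresKernel (Q : Set _) (R : Set _) (Φ : Set _))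

/-- Proposition 2.5: the free product of two finitely `L`-presented groups is
finitely `L`-presented; if both factors are invariantly finitely `L`-presented,
then so is their free product. -/
theorem freeProduct_isFinitelyLPresented
    {G H : Type*} [Group G] [Group H]
    (hG : IsFinitelyLPresented G) (hH : IsFinitelyLPresented H) :
    IsFinitelyLPresented (Monoid.Coprod G H) ∧
      (IsInvariantlyFinitelyLPresented G → IsInvariantlyFinitelyLPresented H →
        IsInvariantlyFinitelyLPresented (Monoid.Coprod G H)) := by
  constructor
  · obtain ⟨n, Q₁, R₁, Φ₁, ⟨eG⟩⟩ := hG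
    obtain ⟨m, Q₂, R₂, Φ₂, ⟨eH⟩⟩ := hH
    obtain ⟨Q, R, Φ, -, -, -, he⟩ := combined n m Q₁ R₁ Φ₁ Q₂ R₂ Φ₂ eG eH
    exact ⟨n + m, Q, R, Φ, he⟩
  · intro hiG hiH
    obtain ⟨n, Q₁, R₁, Φ₁, hinv1, ⟨eG⟩⟩ := hiG
    obtain ⟨m, Q₂, R₂, Φ₂, hinv2, ⟨eH⟩⟩ := hiH
    obtain ⟨Q, R, Φ, hQ, hR, hΦ, he⟩ := combined n m Q₁ R₁ Φ₁ Q₂ R₂ Φ₂ eG eH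
    exact ⟨n + m, Q, R, Φ,
      combined_invariant n m Q₁ R₁ Φ₁ Q₂ R₂ Φ₂ hinv1 hinv2 Q R Φ hQ hR hΦ, he⟩
end

section
/- Let G = F/N be the group presented by a finite L-presentation (X, Q, Φ, R), and let M be a normal subgroup of G which is finitely generated as a normal subgroup (i.e., M is the normal closure in G of finitely many elements). Then G/M is finitely L-presented. If moreover the L-presentation is invariant (σ(N) ⊆ N for all σ ∈ Φ) and M is invariant under each endomorphism of G induced by the elements of Φ, then G/M is invariantly finitely L-presented. -/
/-- Proposition 2.6: if `G = F/N` is presented by a finite `L`-presentation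
`(X, Q, Φ, R)` and `M ⊴ G` is finitely generated as a normal subgroup, then `G/M`
is finitely `L`-presented.  If moreover the `L`-presentation is invariant and `M`
is invariant under the endomorphisms of `G` induced by the elements of `Φ` (each of
which stabilizes `N`, hence the preimage of `M` in `F` is invariant), then
`G/M` is invariantly finitely `L`-presented. -/
theorem quotient_by_finitelyNormallyGenerated_isFinitelyLPresented
    (n : ℕ) (Q R : Finset (FreeGroup (Fin n)))
    (Φ : Finset (Monoid.End (FreeGroup (Fin n))))
    (N : Subgroup (FreeGroup (Fin n))) (hNn : N.Normal)
    (hN : N = lpresKernel (Q : Set _) (R : Set _) (Φ : Set _))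
    (M : Subgroup (FreeGroup (Fin n) ⧸ N)) (hMn : M.Normal)
    (hfg : ∃ S : Finset (FreeGroup (Fin n) ⧸ N), M = Subgroup.normalClosure (S : Set _)) :
    IsFinitelyLPresented ((FreeGroup (Fin n) ⧸ N) ⧸ M) ∧
    ((∀ σ ∈ Φ, ∀ g ∈ N, σ g ∈ N) →
     (∀ σ ∈ Φ, ∀ g ∈ M.comap (QuotientGroup.mk' N), σ g ∈ M.comap (QuotientGroup.mk' N)) →
     IsInvariantlyFinitelyLPresented ((FreeGroup (Fin n) ⧸ N) ⧸ M)) := by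
  classical
  haveI := hNn
  haveI := hMn
  obtain ⟨S, hS⟩ := hfg
  set S' : Finset (FreeGroup (Fin n)) := S.image (fun g => Quotient.out g) with hS'def
  set K' : Subgroup (FreeGroup (Fin n)) := M.comap (QuotientGroup.mk' N) with hK'def
  haveI hK'n : K'.Normal := hMn.comap _
  have hmkS' : ∀ s' ∈ S', (QuotientGroup.mk' N) s' ∈ M := by
    intro s' hs'
    simp only [hS'def, Finset.mem_image] at hs'
    obtain ⟨s, hs, rfl⟩ := hs'
    have : (QuotientGroup.mk' N) (Quotient.out s) = s := QuotientGroup.out_eq' s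
    rw [this, hS]
    exact Subgroup.subset_normalClosure hs
  have hNle : N ≤ K' := by
    intro g hg
    have : (QuotientGroup.mk' N) g = 1 := (QuotientGroup.eq_one_iff g).2 hg
    simp only [hK'def, Subgroup.mem_comap, this]
    exact one_mem M
  have key : lpresKernel ((↑(Q ∪ S') : Set (FreeGroup (Fin n)))) (↑R) (↑Φ) = K' := by
    apply le_antisymm
    · apply Subgroup.normalClosure_le_normal
      rintro x (hx | hx)
      · rw [Finset.coe_union] at hx
        rcases hx with hx | hx
        · exact hNle (hN ▸ Subgroup.subset_normalClosure (Or.inl hx))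
        · exact hmkS' x hx
      · exact hNle (hN ▸ Subgroup.subset_normalClosure (Or.inr hx))
    · set K : Subgroup (FreeGroup (Fin n)) := lpresKernel ((↑(Q ∪ S') : Set (FreeGroup (Fin n)))) (↑R) (↑Φ) with hKdef
      have hNK : N ≤ K := by
        rw [hN]
        apply Subgroup.normalClosure_mono
        apply Set.union_subset_union_left
        rw [Finset.coe_union]
        exact Set.subset_union_left
      haveI : (K.map (QuotientGroup.mk' N)).Normal :=
        Subgroup.Normal.map (lpresKernel_normal _ _ _) _ (QuotientGroup.mk'_surjective N)
      have hMle : M ≤ K.map (QuotientGroup.mk' N) := by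
        rw [hS]
        apply Subgroup.normalClosure_le_normal
        intro s hs
        refine ⟨Quotient.out s, ?_, QuotientGroup.out_eq' s⟩
        apply Subgroup.subset_normalClosure
        left
        rw [Finset.coe_union]
        exact Or.inr (Finset.mem_coe.2 (Finset.mem_image_of_mem _ hs))
      calc K' ≤ (K.map (QuotientGroup.mk' N)).comap (QuotientGroup.mk' N) :=
              Subgroup.comap_mono hMle
        _ = K ⊔ (QuotientGroup.mk' N).ker := Subgroup.comap_map_eq _ _
        _ = K := by rw [QuotientGroup.ker_mk']; exact sup_eq_left.2 hNK
  have hmap : K'.map (QuotientGroup.mk' N) = M :=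
    Subgroup.map_comap_eq_self_of_surjective (QuotientGroup.mk'_surjective N) M
  haveI : (K'.map (QuotientGroup.mk' N)).Normal := hmap ▸ hMn
  have e : ((FreeGroup (Fin n) ⧸ N) ⧸ M) ≃* FreeGroup (Fin n) ⧸ lpresKernel ((↑(Q ∪ S') : Set (FreeGroup (Fin n)))) (↑R) (↑Φ) :=
    (QuotientGroup.quotientMulEquivOfEq hmap.symm).trans
      ((QuotientGroup.quotientQuotientEquivQuotient N K' hNle).trans
        (QuotientGroup.quotientMulEquivOfEq key.symm))
  constructor
  · exact ⟨n, Q ∪ S', R, Φ, ⟨e⟩⟩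
  · intro _ h2
    refine ⟨n, Q ∪ S', R, Φ, ?_, ⟨e⟩⟩
    intro σ hσ g hg
    rw [key] at hg ⊢
    exact h2 σ hσ g hg
end

section
/- Let G and H be finitely L-presented groups and let F be a finitely generated group together with injective homomorphisms ψ : F → G and φ : F → H. Then the amalgamated free product G *_F H is finitely L-presented. -/
open Subgroup QuotientGroup

section Aux

/-- Conjugation of endomorphisms of free groups along a `MulEquiv`, as a monoid hom. -/
def endCongr {X Y : Type} (E : FreeGroup X ≃* FreeGroup Y) :
    Monoid.End (FreeGroup X) →* Monoid.End (FreeGroup Y) where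
  toFun σ := (E.toMonoidHom.comp σ).comp E.symm.toMonoidHom
  map_one' := DFunLike.ext _ _ fun y => E.apply_symm_apply y
  map_mul' σ τ := DFunLike.ext _ _ fun y =>
    (congrArg (fun z => E (σ z)) (E.symm_apply_apply (τ (E.symm y)))).symm

lemma endCongr_apply_apply {X Y : Type} (E : FreeGroup X ≃* FreeGroup Y)
    (σ : Monoid.End (FreeGroup X)) (x : FreeGroup X) :
    endCongr E σ (E x) = E (σ x) :=
  congrArg (fun z => E (σ z)) (E.symm_apply_apply x)

lemma lpresKernel_map {X Y : Type} (E : FreeGroup X ≃* FreeGroup Y)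
    (Q R : Set (FreeGroup X)) (Φ : Set (Monoid.End (FreeGroup X))) :
    (lpresKernel Q R Φ).map (E : FreeGroup X →* FreeGroup Y) =
      lpresKernel (⇑E '' Q) (⇑E '' R) (⇑(endCongr E) '' Φ) := by
  rw [lpresKernel, lpresKernel, Subgroup.map_normalClosure _ _ E.surjective]
  congr 1
  rw [Set.image_union]
  congr 1
  ext y
  simp only [Set.mem_image, Set.mem_iUnion, exists_prop]
  constructor
  · rintro ⟨x, ⟨σ, hσ, hx⟩, rfl⟩
    refine ⟨endCongr E σ, ?_, ?_⟩
    · rw [← MonoidHom.map_mclosure]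
      exact ⟨σ, hσ, rfl⟩
    · obtain ⟨r, hr, rfl⟩ := hx
      exact ⟨E r, ⟨r, hr, rfl⟩, (endCongr_apply_apply E σ r)⟩
  · rintro ⟨τ, hτ, hy⟩
    rw [← MonoidHom.map_mclosure] at hτ
    obtain ⟨σ, hσ, rfl⟩ := hτ
    obtain ⟨z, ⟨r, hr, rfl⟩, rfl⟩ := hy
    exact ⟨σ r, ⟨σ, hσ, ⟨r, hr, rfl⟩⟩, (endCongr_apply_apply E σ r).symm⟩

lemma isFinitelyLPresented_of_equiv {X : Type} [Fintype X] {G : Type*} [Group G]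
    (Q R : Finset (FreeGroup X)) (Φ : Finset (Monoid.End (FreeGroup X)))
    (h : Nonempty (G ≃* FreeGroup X ⧸ lpresKernel (Q : Set _) (R : Set _) (Φ : Set _))) :
    IsFinitelyLPresented G := by
  classical
  obtain ⟨e0⟩ := h
  let e : X ≃ Fin (Fintype.card X) := Fintype.equivFin X
  let E : FreeGroup X ≃* FreeGroup (Fin (Fintype.card X)) := FreeGroup.freeGroupCongr e
  refine ⟨Fintype.card X, Q.image E, R.image E, Φ.image (endCongr E), ⟨e0.trans ?_⟩⟩
  refine QuotientGroup.congr _ _ E ?_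
  rw [lpresKernel_map]
  simp only [Finset.coe_image]

end Aux

section Amalgam

variable {α β : Type}

/-- Inclusion of the left free factor. -/
def fgInl : FreeGroup α →* FreeGroup (α ⊕ β) :=
  FreeGroup.lift fun a => FreeGroup.of (Sum.inl a)

/-- Inclusion of the right free factor. -/
def fgInr : FreeGroup β →* FreeGroup (α ⊕ β) :=
  FreeGroup.lift fun b => FreeGroup.of (Sum.inr b)

@[simp] lemma fgInl_of (a : α) : (fgInl (FreeGroup.of a) : FreeGroup (α ⊕ β)) =
    FreeGroup.of (Sum.inl a) := FreeGroup.lift_apply_of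

@[simp] lemma fgInr_of (b : β) : (fgInr (FreeGroup.of b) : FreeGroup (α ⊕ β)) =
    FreeGroup.of (Sum.inr b) := FreeGroup.lift_apply_of

/-- Extension of an endomorphism of `FreeGroup α` to `FreeGroup (α ⊕ β)`, acting as the
identity on the second factor. -/
noncomputable def extFun₁ (σ : Monoid.End (FreeGroup α)) : Monoid.End (FreeGroup (α ⊕ β)) :=
  FreeGroup.lift (Sum.elim (fun a => fgInl (σ (FreeGroup.of a)))
    fun b => FreeGroup.of (Sum.inr b))

noncomputable def extFun₂ (τ : Monoid.End (FreeGroup β)) : Monoid.End (FreeGroup (α ⊕ β)) :=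
  FreeGroup.lift (Sum.elim (fun a => FreeGroup.of (Sum.inl a))
    fun b => fgInr (τ (FreeGroup.of b)))

lemma extFun₁_of_inl (σ : Monoid.End (FreeGroup α)) (a : α) :
    extFun₁ (β := β) σ (FreeGroup.of (Sum.inl a)) = fgInl (σ (FreeGroup.of a)) :=
  FreeGroup.lift_apply_of

lemma extFun₁_of_inr (σ : Monoid.End (FreeGroup α)) (b : β) :
    extFun₁ (β := β) σ (FreeGroup.of (Sum.inr b)) = FreeGroup.of (Sum.inr b) :=
  FreeGroup.lift_apply_of

lemma extFun₂_of_inl (τ : Monoid.End (FreeGroup β)) (a : α) :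
    extFun₂ (α := α) τ (FreeGroup.of (Sum.inl a)) = FreeGroup.of (Sum.inl a) :=
  FreeGroup.lift_apply_of

lemma extFun₂_of_inr (τ : Monoid.End (FreeGroup β)) (b : β) :
    extFun₂ (α := α) τ (FreeGroup.of (Sum.inr b)) = fgInr (τ (FreeGroup.of b)) :=
  FreeGroup.lift_apply_of

lemma extFun₁_fgInl (σ : Monoid.End (FreeGroup α)) (x : FreeGroup α) :
    extFun₁ (β := β) σ (fgInl x) = fgInl (σ x) := by
  have h : (extFun₁ (β := β) σ : FreeGroup (α ⊕ β) →* FreeGroup (α ⊕ β)).comp fgInl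
      = (fgInl : FreeGroup α →* FreeGroup (α ⊕ β)).comp (σ : FreeGroup α →* FreeGroup α) :=
    FreeGroup.ext_hom _ _ fun a => by
      simp [extFun₁, FreeGroup.lift_apply_of]; rfl
  exact DFunLike.congr_fun h x

lemma extFun₁_fgInr (σ : Monoid.End (FreeGroup α)) (y : FreeGroup β) :
    extFun₁ (β := β) σ (fgInr y) = fgInr y := by
  have h : (extFun₁ (β := β) σ : FreeGroup (α ⊕ β) →* FreeGroup (α ⊕ β)).comp fgInr
      = (fgInr : FreeGroup β →* FreeGroup (α ⊕ β)) :=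
    FreeGroup.ext_hom _ _ fun b => by
      simp [extFun₁, FreeGroup.lift_apply_of]
  exact DFunLike.congr_fun h y

lemma extFun₂_fgInr (τ : Monoid.End (FreeGroup β)) (y : FreeGroup β) :
    extFun₂ (α := α) τ (fgInr y) = fgInr (τ y) := by
  have h : (extFun₂ (α := α) τ : FreeGroup (α ⊕ β) →* FreeGroup (α ⊕ β)).comp fgInr
      = (fgInr : FreeGroup β →* FreeGroup (α ⊕ β)).comp (τ : FreeGroup β →* FreeGroup β) :=
    FreeGroup.ext_hom _ _ fun b => by
      simp [extFun₂, FreeGroup.lift_apply_of]; rfl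
  exact DFunLike.congr_fun h y

lemma extFun₂_fgInl (τ : Monoid.End (FreeGroup β)) (x : FreeGroup α) :
    extFun₂ (α := α) τ (fgInl x) = fgInl x := by
  have h : (extFun₂ (α := α) τ : FreeGroup (α ⊕ β) →* FreeGroup (α ⊕ β)).comp fgInl
      = (fgInl : FreeGroup α →* FreeGroup (α ⊕ β)) :=
    FreeGroup.ext_hom _ _ fun a => by
      simp [extFun₂, FreeGroup.lift_apply_of]
  exact DFunLike.congr_fun h x

/-- `extFun₁` as a monoid homomorphism of endomorphism monoids. -/
noncomputable def extEnd₁ : Monoid.End (FreeGroup α) →* Monoid.End (FreeGroup (α ⊕ β)) where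
  toFun := extFun₁
  map_one' := FreeGroup.ext_hom _ _ (by
    rintro (a | b)
    · show extFun₁ 1 (FreeGroup.of (Sum.inl a)) = FreeGroup.of (Sum.inl a)
      rw [extFun₁_of_inl]; rfl
    · show extFun₁ 1 (FreeGroup.of (Sum.inr b)) = FreeGroup.of (Sum.inr b)
      rw [extFun₁_of_inr])
  map_mul' σ τ := FreeGroup.ext_hom _ _ (by
    rintro (a | b)
    · show extFun₁ (σ * τ) (FreeGroup.of (Sum.inl a))
        = extFun₁ σ (extFun₁ τ (FreeGroup.of (Sum.inl a)))
      rw [extFun₁_of_inl, extFun₁_of_inl, extFun₁_fgInl]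
      rfl
    · show extFun₁ (σ * τ) (FreeGroup.of (Sum.inr b))
        = extFun₁ σ (extFun₁ τ (FreeGroup.of (Sum.inr b)))
      rw [extFun₁_of_inr, extFun₁_of_inr, extFun₁_of_inr])

noncomputable def extEnd₂ : Monoid.End (FreeGroup β) →* Monoid.End (FreeGroup (α ⊕ β)) where
  toFun := extFun₂
  map_one' := FreeGroup.ext_hom _ _ (by
    rintro (a | b)
    · show extFun₂ 1 (FreeGroup.of (Sum.inl a)) = FreeGroup.of (Sum.inl a)
      rw [extFun₂_of_inl]
    · show extFun₂ 1 (FreeGroup.of (Sum.inr b)) = FreeGroup.of (Sum.inr b)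
      rw [extFun₂_of_inr]; rfl)
  map_mul' σ τ := FreeGroup.ext_hom _ _ (by
    rintro (a | b)
    · show extFun₂ (σ * τ) (FreeGroup.of (Sum.inl a))
        = extFun₂ σ (extFun₂ τ (FreeGroup.of (Sum.inl a)))
      rw [extFun₂_of_inl, extFun₂_of_inl, extFun₂_of_inl]
    · show extFun₂ (σ * τ) (FreeGroup.of (Sum.inr b))
        = extFun₂ σ (extFun₂ τ (FreeGroup.of (Sum.inr b)))
      rw [extFun₂_of_inr, extFun₂_of_inr, extFun₂_fgInr]
      rfl)

lemma closure_ext_prop (Φ1 : Set (Monoid.End (FreeGroup α))) (Φ2 : Set (Monoid.End (FreeGroup β)))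
    (μ : Monoid.End (FreeGroup (α ⊕ β)))
    (hμ : μ ∈ Submonoid.closure (⇑(extEnd₁ (β := β)) '' Φ1 ∪ ⇑(extEnd₂ (α := α)) '' Φ2)) :
    (∃ σ ∈ Submonoid.closure Φ1, ∀ x, μ (fgInl x) = fgInl (σ x)) ∧
    (∃ τ ∈ Submonoid.closure Φ2, ∀ y, μ (fgInr y) = fgInr (τ y)) := by
  induction hμ using Submonoid.closure_induction with
  | mem μ hμ =>
    rcases hμ with ⟨σ, hσ, rfl⟩ | ⟨τ, hτ, rfl⟩
    · exact ⟨⟨σ, Submonoid.subset_closure hσ, fun x => extFun₁_fgInl σ x⟩,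
        ⟨1, one_mem _, fun y => by show extFun₁ σ (fgInr y) = _; simpa [Monoid.End.coe_one] using extFun₁_fgInr σ y⟩⟩
    · exact ⟨⟨1, one_mem _, fun x => by show extFun₂ τ (fgInl x) = _; simpa [Monoid.End.coe_one] using extFun₂_fgInl τ x⟩,
        ⟨τ, Submonoid.subset_closure hτ, fun y => extFun₂_fgInr τ y⟩⟩
  | one =>
    exact ⟨⟨1, one_mem _, fun x => by simp [Monoid.End.coe_one]⟩,
      ⟨1, one_mem _, fun y => by simp [Monoid.End.coe_one]⟩⟩
  | mul μ ν hμ' hν' ihμ ihν =>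
    obtain ⟨⟨σ1, hσ1, h1⟩, ⟨τ1, hτ1, h1'⟩⟩ := ihμ
    obtain ⟨⟨σ2, hσ2, h2⟩, ⟨τ2, hτ2, h2'⟩⟩ := ihν
    refine ⟨⟨σ1 * σ2, mul_mem hσ1 hσ2, fun x => ?_⟩, ⟨τ1 * τ2, mul_mem hτ1 hτ2, fun y => ?_⟩⟩
    · simp only [Monoid.End.coe_mul, Function.comp_apply]
      rw [h2, h1]
    · simp only [Monoid.End.coe_mul, Function.comp_apply]
      rw [h2', h1']

end Amalgam


/-- Corollary 2.7: if `G` and `H` are finitely `L`-presented groups, `F` is a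
finitely generated group, and `ψ : F → G`, `φ : F → H` are injective homomorphisms,
then the amalgamated free product `G *_F H` (the quotient of the free product `G * H`
by the normal closure of `{ψ(f)·φ(f)⁻¹ : f ∈ F}`) is finitely `L`-presented. -/
theorem amalgamatedFreeProduct_isFinitelyLPresented
    {G H F : Type*} [Group G] [Group H] [Group F]
    (hG : IsFinitelyLPresented G) (hH : IsFinitelyLPresented H)
    (hF : Group.FG F) (ψ : F →* G) (φ : F →* H)
    (hψ : Function.Injective ψ) (hφ : Function.Injective φ) :
    IsFinitelyLPresented
      (Monoid.Coprod G H ⧸ Subgroup.normalClosure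
        {x : Monoid.Coprod G H |
          ∃ f : F, x = Monoid.Coprod.inl (ψ f) * (Monoid.Coprod.inr (φ f))⁻¹}) := by
  classical
  obtain ⟨n1, Q1, R1, Φ1, ⟨e1⟩⟩ := hG
  obtain ⟨n2, Q2, R2, Φ2, ⟨e2⟩⟩ := hH
  obtain ⟨SF, hSF⟩ := hF.out
  set S : Set (Monoid.Coprod G H) :=
    {x | ∃ f : F, x = Monoid.Coprod.inl (ψ f) * (Monoid.Coprod.inr (φ f))⁻¹} with hSdef
  set N := Subgroup.normalClosure S with hNdef
  haveI : N.Normal := Subgroup.normalClosure_normal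
  set K1 : Subgroup (FreeGroup (Fin n1)) := lpresKernel ↑Q1 ↑R1 ↑Φ1 with hK1def
  set K2 : Subgroup (FreeGroup (Fin n2)) := lpresKernel ↑Q2 ↑R2 ↑Φ2 with hK2def
  haveI : K1.Normal := hK1def ▸ lpresKernel_normal _ _ _
  haveI : K2.Normal := hK2def ▸ lpresKernel_normal _ _ _
  -- the evaluation of generators
  let g1 : Fin n1 → G := fun i => e1.symm (QuotientGroup.mk (FreeGroup.of i))
  let g2 : Fin n2 → H := fun j => e2.symm (QuotientGroup.mk (FreeGroup.of j))
  let π0 : FreeGroup (Fin n1 ⊕ Fin n2) →* Monoid.Coprod G H :=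
    FreeGroup.lift (Sum.elim (fun i => Monoid.Coprod.inl (g1 i))
      fun j => Monoid.Coprod.inr (g2 j))
  have hπ01 : ∀ u : FreeGroup (Fin n1),
      π0 (fgInl u) = Monoid.Coprod.inl (e1.symm (QuotientGroup.mk u)) := by
    intro u
    have h : π0.comp fgInl = (Monoid.Coprod.inl (M := G) (N := H)).comp
        (e1.symm.toMonoidHom.comp (QuotientGroup.mk' K1)) :=
      FreeGroup.ext_hom _ _ fun i => by
        rw [MonoidHom.comp_apply, fgInl_of]
        simp [π0, FreeGroup.lift_apply_of, g1]
        rfl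
    exact DFunLike.congr_fun h u
  have hπ02 : ∀ u : FreeGroup (Fin n2),
      π0 (fgInr u) = Monoid.Coprod.inr (e2.symm (QuotientGroup.mk u)) := by
    intro u
    have h : π0.comp fgInr = (Monoid.Coprod.inr (M := G) (N := H)).comp
        (e2.symm.toMonoidHom.comp (QuotientGroup.mk' K2)) :=
      FreeGroup.ext_hom _ _ fun j => by
        rw [MonoidHom.comp_apply, fgInr_of]
        simp [π0, FreeGroup.lift_apply_of, g2]
        rfl
    exact DFunLike.congr_fun h u
  have hπ0surj : Function.Surjective π0 := by
    intro y
    induction y using Monoid.Coprod.induction_on with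
    | inl g =>
      obtain ⟨u, hu⟩ := QuotientGroup.mk_surjective (e1 g)
      exact ⟨fgInl u, by rw [hπ01, hu, MulEquiv.symm_apply_apply]⟩
    | inr h =>
      obtain ⟨u, hu⟩ := QuotientGroup.mk_surjective (e2 h)
      exact ⟨fgInr u, by rw [hπ02, hu, MulEquiv.symm_apply_apply]⟩
    | mul x y hx hy =>
      obtain ⟨u, rfl⟩ := hx
      obtain ⟨t, rfl⟩ := hy
      exact ⟨u * t, map_mul π0 u t⟩
  -- words representing the amalgamation relators
  choose w hw using fun f : F => QuotientGroup.mk_surjective (e1 (ψ f))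
  choose v hv using fun f : F => QuotientGroup.mk_surjective (e2 (φ f))
  -- the new L-presentation data
  set T : Finset (FreeGroup (Fin n1 ⊕ Fin n2)) :=
    SF.image (fun f => fgInl (w f) * (fgInr (v f))⁻¹) with hTdef
  set Qb : Finset (FreeGroup (Fin n1 ⊕ Fin n2)) :=
    Q1.image fgInl ∪ Q2.image fgInr ∪ T with hQbdef
  set Rb : Finset (FreeGroup (Fin n1 ⊕ Fin n2)) :=
    R1.image fgInl ∪ R2.image fgInr with hRbdef
  set Φb : Finset (Monoid.End (FreeGroup (Fin n1 ⊕ Fin n2))) :=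
    Φ1.image extEnd₁ ∪ Φ2.image extEnd₂ with hΦbdef
  set L : Subgroup (FreeGroup (Fin n1 ⊕ Fin n2)) := lpresKernel ↑Qb ↑Rb ↑Φb with hLdef
  haveI hLn : L.Normal := hLdef ▸ lpresKernel_normal _ _ _
  have hQbcoe : (Qb : Set (FreeGroup (Fin n1 ⊕ Fin n2)))
      = (⇑fgInl '' ↑Q1 ∪ ⇑fgInr '' ↑Q2)
        ∪ (fun f => fgInl (w f) * (fgInr (v f))⁻¹) '' ↑SF := by
    simp only [hQbdef, hTdef, Finset.coe_union, Finset.coe_image]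
  have hRbcoe : (Rb : Set (FreeGroup (Fin n1 ⊕ Fin n2)))
      = ⇑fgInl '' ↑R1 ∪ ⇑fgInr '' ↑R2 := by
    simp [hRbdef, Finset.coe_union, Finset.coe_image]
  have hΦbcoe : (Φb : Set (Monoid.End (FreeGroup (Fin n1 ⊕ Fin n2))))
      = ⇑extEnd₁ '' ↑Φ1 ∪ ⇑extEnd₂ '' ↑Φ2 := by
    simp [hΦbdef, Finset.coe_union, Finset.coe_image]
  -- the projection
  set π : FreeGroup (Fin n1 ⊕ Fin n2) →* Monoid.Coprod G H ⧸ N :=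
    (QuotientGroup.mk' N).comp π0 with hπdef
  have hπsurj : Function.Surjective π := (QuotientGroup.mk'_surjective N).comp hπ0surj
  have hker1 : ∀ u ∈ K1, π (fgInl u) = 1 := by
    intro u hu
    rw [hπdef, MonoidHom.comp_apply, hπ01, (QuotientGroup.eq_one_iff u).mpr hu,
      map_one, map_one, map_one]
  have hker2 : ∀ u ∈ K2, π (fgInr u) = 1 := by
    intro u hu
    rw [hπdef, MonoidHom.comp_apply, hπ02, (QuotientGroup.eq_one_iff u).mpr hu,
      map_one, map_one, map_one]
  -- L ≤ ker π
  have hLle : L ≤ π.ker := by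
    rw [hLdef, lpresKernel]
    apply Subgroup.normalClosure_le_normal
    rintro x (hx | hx)
    · rw [hQbcoe] at hx
      rcases hx with (⟨q, hq, rfl⟩ | ⟨q, hq, rfl⟩) | ⟨f, hf, rfl⟩
      · exact MonoidHom.mem_ker.mpr
          (hker1 q (Subgroup.subset_normalClosure (Or.inl hq)))
      · exact MonoidHom.mem_ker.mpr
          (hker2 q (Subgroup.subset_normalClosure (Or.inl hq)))
      · have h1 : π0 (fgInl (w f)) = Monoid.Coprod.inl (ψ f) := by
          rw [hπ01, hw, MulEquiv.symm_apply_apply]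
        have h2 : π0 (fgInr (v f)) = Monoid.Coprod.inr (φ f) := by
          rw [hπ02, hv, MulEquiv.symm_apply_apply]
        refine MonoidHom.mem_ker.mpr ?_
        rw [hπdef, MonoidHom.comp_apply, map_mul, map_inv, h1, h2]
        exact (QuotientGroup.eq_one_iff _).mpr
          (Subgroup.subset_normalClosure ⟨f, rfl⟩)
    · obtain ⟨μ, hμ, hximg⟩ := Set.mem_iUnion₂.mp hx
      obtain ⟨y, hy, rfl⟩ := hximg
      rw [hΦbcoe] at hμ
      obtain ⟨⟨σ, hσ, hc1⟩, ⟨τ, hτ, hc2⟩⟩ := closure_ext_prop _ _ μ hμ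
      rw [hRbcoe] at hy
      rcases hy with ⟨r, hr, rfl⟩ | ⟨r, hr, rfl⟩
      · show μ (fgInl r) ∈ π.ker
        rw [MonoidHom.mem_ker, hc1 r]
        exact hker1 (σ r) (Subgroup.subset_normalClosure
          (Or.inr (Set.mem_iUnion₂.mpr ⟨σ, hσ, ⟨r, hr, rfl⟩⟩)))
      · show μ (fgInr r) ∈ π.ker
        rw [MonoidHom.mem_ker, hc2 r]
        exact hker2 (τ r) (Subgroup.subset_normalClosure
          (Or.inr (Set.mem_iUnion₂.mpr ⟨τ, hτ, ⟨r, hr, rfl⟩⟩)))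
  -- inclusions of the two kernels into L
  have hKL1 : ∀ u ∈ K1, fgInl u ∈ L := by
    haveI : (L.comap (fgInl : FreeGroup (Fin n1) →* _)).Normal := hLn.comap _
    have hle : K1 ≤ L.comap (fgInl : FreeGroup (Fin n1) →* _) := by
      rw [hK1def, lpresKernel]
      apply Subgroup.normalClosure_le_normal
      rintro x (hx | hx)
      · refine Subgroup.mem_comap.mpr (Subgroup.subset_normalClosure (Or.inl ?_))
        rw [hQbcoe]
        exact Or.inl (Or.inl ⟨x, hx, rfl⟩)
      · obtain ⟨σ, hσ, hximg⟩ := Set.mem_iUnion₂.mp hx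
        obtain ⟨r, hr, rfl⟩ := hximg
        refine Subgroup.mem_comap.mpr ?_
        have hmem : extEnd₁ σ ∈ Submonoid.closure (Φb : Set (Monoid.End (FreeGroup (Fin n1 ⊕ Fin n2)))) := by
          rw [hΦbcoe]
          refine Submonoid.closure_mono Set.subset_union_left ?_
          rw [← MonoidHom.map_mclosure]
          exact ⟨σ, hσ, rfl⟩
        have heq : extEnd₁ σ (fgInl r) = fgInl (σ r) := extFun₁_fgInl (β := Fin n2) σ r
        refine Subgroup.subset_normalClosure (Or.inr (Set.mem_iUnion₂.mpr
          ⟨extEnd₁ σ, hmem, ⟨fgInl r, ?_, heq⟩⟩))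
        rw [hRbcoe]
        exact Or.inl ⟨r, hr, rfl⟩
    exact fun u hu => hle hu
  have hKL2 : ∀ u ∈ K2, fgInr u ∈ L := by
    haveI : (L.comap (fgInr : FreeGroup (Fin n2) →* _)).Normal := hLn.comap _
    have hle : K2 ≤ L.comap (fgInr : FreeGroup (Fin n2) →* _) := by
      rw [hK2def, lpresKernel]
      apply Subgroup.normalClosure_le_normal
      rintro x (hx | hx)
      · refine Subgroup.mem_comap.mpr (Subgroup.subset_normalClosure (Or.inl ?_))
        rw [hQbcoe]
        exact Or.inl (Or.inr ⟨x, hx, rfl⟩)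
      · obtain ⟨τ, hτ, hximg⟩ := Set.mem_iUnion₂.mp hx
        obtain ⟨r, hr, rfl⟩ := hximg
        refine Subgroup.mem_comap.mpr ?_
        have hmem : extEnd₂ τ ∈ Submonoid.closure (Φb : Set (Monoid.End (FreeGroup (Fin n1 ⊕ Fin n2)))) := by
          rw [hΦbcoe]
          refine Submonoid.closure_mono Set.subset_union_right ?_
          rw [← MonoidHom.map_mclosure]
          exact ⟨τ, hτ, rfl⟩
        have heq : extEnd₂ τ (fgInr r) = fgInr (τ r) := extFun₂_fgInr (α := Fin n1) τ r
        refine Subgroup.subset_normalClosure (Or.inr (Set.mem_iUnion₂.mpr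
          ⟨extEnd₂ τ, hmem, ⟨fgInr r, ?_, heq⟩⟩))
        rw [hRbcoe]
        exact Or.inr ⟨r, hr, rfl⟩
    exact fun u hu => hle hu
  -- construction of the retraction ρ
  set mkL : FreeGroup (Fin n1 ⊕ Fin n2) →* FreeGroup (Fin n1 ⊕ Fin n2) ⧸ L :=
    QuotientGroup.mk' L with hmkLdef
  have ha1 : K1 ≤ (mkL.comp (fgInl : FreeGroup (Fin n1) →* _)).ker := fun u hu =>
    MonoidHom.mem_ker.mpr ((QuotientGroup.eq_one_iff _).mpr (hKL1 u hu))
  have ha2 : K2 ≤ (mkL.comp (fgInr : FreeGroup (Fin n2) →* _)).ker := fun u hu =>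
    MonoidHom.mem_ker.mpr ((QuotientGroup.eq_one_iff _).mpr (hKL2 u hu))
  set a : G →* FreeGroup (Fin n1 ⊕ Fin n2) ⧸ L :=
    (QuotientGroup.lift K1 (mkL.comp fgInl) ha1).comp e1.toMonoidHom with hadef
  set b : H →* FreeGroup (Fin n1 ⊕ Fin n2) ⧸ L :=
    (QuotientGroup.lift K2 (mkL.comp fgInr) ha2).comp e2.toMonoidHom with hbdef
  have hab : a.comp ψ = b.comp φ := by
    refine MonoidHom.eq_of_eqOn_dense hSF ?_
    intro f hf
    show a (ψ f) = b (φ f)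
    have h1 : a (ψ f) = mkL (fgInl (w f)) := by
      show QuotientGroup.lift K1 (mkL.comp fgInl) ha1 (e1 (ψ f)) = _
      rw [← hw f, QuotientGroup.lift_mk']
      rfl
    have h2 : b (φ f) = mkL (fgInr (v f)) := by
      show QuotientGroup.lift K2 (mkL.comp fgInr) ha2 (e2 (φ f)) = _
      rw [← hv f, QuotientGroup.lift_mk']
      rfl
    have hTmem : fgInl (w f) * (fgInr (v f))⁻¹ ∈ L := by
      refine Subgroup.subset_normalClosure (Or.inl ?_)
      rw [hQbcoe]
      exact Or.inr ⟨f, hf, rfl⟩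
    have h3 := (QuotientGroup.eq_one_iff _).mpr hTmem
    rw [QuotientGroup.mk_mul, QuotientGroup.mk_inv] at h3
    rw [h1, h2]
    exact mul_inv_eq_one.mp h3
  have hSker : S ⊆ ((Monoid.Coprod.lift a b).ker : Set (Monoid.Coprod G H)) := by
    rintro x ⟨f, rfl⟩
    rw [SetLike.mem_coe, MonoidHom.mem_ker, map_mul, map_inv,
      Monoid.Coprod.lift_apply_inl, Monoid.Coprod.lift_apply_inr, mul_inv_eq_one]
    exact DFunLike.congr_fun hab f
  set ρ : (Monoid.Coprod G H ⧸ N) →* FreeGroup (Fin n1 ⊕ Fin n2) ⧸ L :=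
    QuotientGroup.lift N (Monoid.Coprod.lift a b)
      (Subgroup.normalClosure_le_normal hSker) with hρdef
  have hρπ : ρ.comp π = mkL := by
    refine FreeGroup.ext_hom _ _ ?_
    rintro (i | j)
    · have h0 : π0 (FreeGroup.of (Sum.inl i)) = Monoid.Coprod.inl (g1 i) := by
        simp [π0, FreeGroup.lift_apply_of]
      show ρ (QuotientGroup.mk' N (π0 (FreeGroup.of (Sum.inl i)))) = _
      rw [h0]
      show (Monoid.Coprod.lift a b) (Monoid.Coprod.inl (g1 i)) = _
      rw [Monoid.Coprod.lift_apply_inl]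
      show QuotientGroup.lift K1 (mkL.comp fgInl) ha1
        (e1 (e1.symm (QuotientGroup.mk (FreeGroup.of i)))) = _
      rw [MulEquiv.apply_symm_apply, QuotientGroup.lift_mk', MonoidHom.comp_apply, fgInl_of]
    · have h0 : π0 (FreeGroup.of (Sum.inr j)) = Monoid.Coprod.inr (g2 j) := by
        simp [π0, FreeGroup.lift_apply_of]
      show ρ (QuotientGroup.mk' N (π0 (FreeGroup.of (Sum.inr j)))) = _
      rw [h0]
      show (Monoid.Coprod.lift a b) (Monoid.Coprod.inr (g2 j)) = _
      rw [Monoid.Coprod.lift_apply_inr]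
      show QuotientGroup.lift K2 (mkL.comp fgInr) ha2
        (e2 (e2.symm (QuotientGroup.mk (FreeGroup.of j)))) = _
      rw [MulEquiv.apply_symm_apply, QuotientGroup.lift_mk', MonoidHom.comp_apply, fgInr_of]
  have hkerle : π.ker ≤ L := by
    intro x hx
    have h1 : mkL x = 1 := by
      rw [← DFunLike.congr_fun hρπ x, MonoidHom.comp_apply, MonoidHom.mem_ker.mp hx, map_one]
    exact (QuotientGroup.eq_one_iff x).mp h1
  have hker : π.ker = L := le_antisymm hkerle hLle
  refine isFinitelyLPresented_of_equiv Qb Rb Φb ⟨?_⟩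
  exact (QuotientGroup.quotientKerEquivOfSurjective π hπsurj).symm.trans
    (QuotientGroup.quotientMulEquivOfEq hker)
end

section
/- Let F be a free group of finite rank, H ≤ F a subgroup of finite index, Φ a finite set of endomorphisms of F, Φ* the submonoid of End(F) generated by Φ, and L̃ = ⋂_{σ∈Φ*} σ⁻¹(H) the stabilizing subgroup of H. Then: (i) L̃ ⊆ H; (ii) ψ(L̃) ⊆ L̃ for every ψ ∈ Φ; (iii) L̃ has finite index in F; and (iv) L̃ is the largest Φ*-invariant subgroup of H, i.e., every subgroup N ≤ H with σ(N) ⊆ N for all σ ∈ Φ* is contained in L̃. -/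
/-- Proposition 5.9 about the stabilizing subgroup `L̃ = ⋂_{σ∈Φ*} σ⁻¹(H)` of a finite
index subgroup `H` of a free group `F` of finite rank: (i) `L̃ ⊆ H`; (ii) `L̃` is
`Φ`-invariant; (iii) `L̃` has finite index in `F`; (iv) `L̃` is the largest
`Φ*`-invariant subgroup of `H`. -/
theorem stabilizingSubgroup_spec
    (n : ℕ) (H : Subgroup (FreeGroup (Fin n))) (hHfi : H.FiniteIndex)
    (Φ : Finset (Monoid.End (FreeGroup (Fin n))))
    (L : Subgroup (FreeGroup (Fin n)))
    (hL : L = ⨅ σ ∈ Submonoid.closure (Φ : Set (Monoid.End (FreeGroup (Fin n)))),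
      H.comap (σ : FreeGroup (Fin n) →* FreeGroup (Fin n))) :
    L ≤ H ∧
    (∀ ψ ∈ Φ, ∀ g ∈ L, ψ g ∈ L) ∧
    L.FiniteIndex ∧
    (∀ N : Subgroup (FreeGroup (Fin n)), N ≤ H →
      (∀ σ ∈ Submonoid.closure (Φ : Set (Monoid.End (FreeGroup (Fin n)))),
        ∀ g ∈ N, σ g ∈ N) → N ≤ L) := by
  set F := FreeGroup (Fin n)
  have hmemL : ∀ g : F, g ∈ L ↔
      ∀ σ ∈ Submonoid.closure (Φ : Set (Monoid.End F)), σ g ∈ H := by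
    intro g
    simp [hL, Subgroup.mem_iInf, Subgroup.mem_comap]
    exact Iff.rfl
  refine ⟨?_, ?_, ?_, ?_⟩
  · -- L ≤ H
    intro g hg
    have := (hmemL g).mp hg 1 (Submonoid.one_mem _)
    simpa using this
  · -- Φ-invariance
    intro ψ hψ g hg
    rw [hmemL]
    intro σ hσ
    have hσψ : σ * ψ ∈ Submonoid.closure (Φ : Set (Monoid.End F)) :=
      Submonoid.mul_mem _ hσ (Submonoid.subset_closure hψ)
    have := (hmemL g).mp hg (σ * ψ) hσψ
    simpa using this
  · -- finite index
    haveI : Finite (F ⧸ H) := H.finite_quotient_of_finiteIndex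
    set φ : F →* Equiv.Perm (F ⧸ H) := MulAction.toPermHom F (F ⧸ H) with hφ
    haveI : Finite (F →* Equiv.Perm (F ⧸ H)) :=
      Finite.of_equiv _ (FreeGroup.lift : (Fin n → Equiv.Perm (F ⧸ H)) ≃ _)
    have key : ∀ σ ∈ Submonoid.closure (Φ : Set (Monoid.End F)),
        (φ.comp (σ : F →* F)).ker ≤ H.comap (σ : F →* F) := by
      intro σ _ g hg
      have : σ g ∈ H.normalCore := by
        rw [Subgroup.normalCore_eq_ker]
        exact hg
      exact H.normalCore_le this
    set S : Set (F →* Equiv.Perm (F ⧸ H)) :=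
      (fun σ : Submonoid.closure (Φ : Set (Monoid.End F)) =>
        φ.comp ((σ : Monoid.End F) : F →* F)) '' Set.univ with hS
    haveI : Finite S := Set.Finite.to_subtype (Set.toFinite S)
    have hK : (⨅ f : S, (f : F →* Equiv.Perm (F ⧸ H)).ker) ≤ L := by
      rw [hL]
      refine le_iInf fun σ => le_iInf fun hσ => ?_
      refine le_trans ?_ (key σ hσ)
      exact iInf_le _ (⟨φ.comp (σ : F →* F), ⟨⟨σ, hσ⟩, Set.mem_univ _, rfl⟩⟩ : S)
    haveI : (⨅ f : S, (f : F →* Equiv.Perm (F ⧸ H)).ker).FiniteIndex :=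
      Subgroup.finiteIndex_iInf fun f => Subgroup.finiteIndex_ker _
    exact Subgroup.finiteIndex_of_le hK
  · -- largest invariant subgroup
    intro N hNH hNinv g hg
    rw [hmemL]
    intro σ hσ
    exact hNH (hNinv σ hσ g hg)
end

section
/- Let F be a free group of finite rank, H ≤ F of finite index, Φ a finite set of endomorphisms of F with generated submonoid Φ*, φ : F → Sym(H\F) the permutation representation on the right cosets of H, L̃ = ⋂_{σ∈Φ*} σ⁻¹(H) the stabilizing subgroup, and L = ⋂_{σ∈Φ*} ker(φ∘σ) the stabilizing core. Then L̃ = L if and only if L̃ ⊆ Core_F(H). -/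
/-- The permutation representation of a group `F` on the right cosets `H\F` of a
subgroup `H`, induced by right multiplication.  (With Mathlib's convention that
permutations compose right-to-left, the element `g` acts on a right coset `Hx`
as `Hx ↦ Hxg⁻¹`, which makes `g ↦ (Hx ↦ Hxg)` into a monoid homomorphism when
read in the usual left-to-right convention for permutation actions.) -/
def rightCosetRep {F : Type*} [Group F] (H : Subgroup F) :
    F →* Equiv.Perm (Quotient (QuotientGroup.rightRel H)) where
  toFun g :=
    { toFun := Quotient.map' (· * g⁻¹) fun a b hab => by
        rw [QuotientGroup.rightRel_apply] at hab ⊢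
        simpa [mul_assoc] using hab
      invFun := Quotient.map' (· * g) fun a b hab => by
        rw [QuotientGroup.rightRel_apply] at hab ⊢
        simpa [mul_assoc] using hab
      left_inv := fun q => Quotient.inductionOn' q fun a => by
        simp [Quotient.map'_mk'', mul_assoc]
      right_inv := fun q => Quotient.inductionOn' q fun a => by
        simp [Quotient.map'_mk'', mul_assoc] }
  map_one' := by
    ext q
    exact Quotient.inductionOn' q fun a => by simp [Quotient.map'_mk'']
  map_mul' x y := by
    ext q
    exact Quotient.inductionOn' q fun a => by simp [Quotient.map'_mk'', mul_assoc]

theorem mem_ker_rightCosetRep {F : Type*} [Group F] (H : Subgroup F) (g : F) :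
    g ∈ (rightCosetRep H).ker ↔ g ∈ H.normalCore := by
  rw [MonoidHom.mem_ker, Equiv.ext_iff]
  constructor
  · intro h b
    have := h (Quotient.mk'' b)
    simp only [rightCosetRep, MonoidHom.coe_mk, OneHom.coe_mk, Equiv.coe_fn_mk,
      Quotient.map'_mk'', Equiv.Perm.coe_one, id_eq] at this
    rw [Quotient.eq'', QuotientGroup.rightRel_apply] at this
    simpa [mul_assoc] using this
  · intro h q
    refine Quotient.inductionOn' q fun b => ?_
    simp only [rightCosetRep, MonoidHom.coe_mk, OneHom.coe_mk, Equiv.coe_fn_mk,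
      Quotient.map'_mk'', Equiv.Perm.coe_one, id_eq]
    rw [Quotient.eq'', QuotientGroup.rightRel_apply]
    simpa [mul_assoc] using h b

/-- Lemma 5.17: the stabilizing subgroup `L̃ = ⋂_{σ∈Φ*} σ⁻¹(H)` equals the stabilizing
core `L = ⋂_{σ∈Φ*} ker(φ∘σ)` if and only if `L̃ ⊆ Core_F(H)`. -/
theorem stabilizingSubgroup_eq_core_iff
    (n : ℕ) (H : Subgroup (FreeGroup (Fin n))) (hHfi : H.FiniteIndex)
    (Φ : Finset (Monoid.End (FreeGroup (Fin n))))
    (φ : FreeGroup (Fin n) →* Equiv.Perm (Quotient (QuotientGroup.rightRel H)))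
    (hφ : φ = rightCosetRep H)
    (Lt : Subgroup (FreeGroup (Fin n)))
    (hLt : Lt = ⨅ σ ∈ Submonoid.closure (Φ : Set (Monoid.End (FreeGroup (Fin n)))),
      H.comap (σ : FreeGroup (Fin n) →* FreeGroup (Fin n)))
    (L : Subgroup (FreeGroup (Fin n)))
    (hL : L = ⨅ σ ∈ Submonoid.closure (Φ : Set (Monoid.End (FreeGroup (Fin n)))),
      (φ.comp (σ : FreeGroup (Fin n) →* FreeGroup (Fin n))).ker) :
    Lt = L ↔ Lt ≤ H.normalCore := by
  subst hφ hLt hL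
  constructor
  · intro h
    rw [h]
    intro x hx
    have h1 := Subgroup.mem_iInf.mp (Subgroup.mem_iInf.mp hx 1) (Submonoid.one_mem _)
    rw [MonoidHom.mem_ker] at h1
    have : x ∈ (rightCosetRep H).ker := by
      rw [MonoidHom.mem_ker]
      exact h1
    exact (mem_ker_rightCosetRep H x).mp this
  · intro hcore
    refine le_antisymm ?_ ?_
    · intro x hx
      refine Subgroup.mem_iInf.mpr fun σ => Subgroup.mem_iInf.mpr fun hσ => ?_
      rw [MonoidHom.mem_ker]
      change (rightCosetRep H) (σ x) = 1
      have hσx : σ x ∈ ⨅ σ ∈ Submonoid.closure (Φ : Set (Monoid.End (FreeGroup (Fin n)))),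
          H.comap (σ : FreeGroup (Fin n) →* FreeGroup (Fin n)) := by
        refine Subgroup.mem_iInf.mpr fun τ => Subgroup.mem_iInf.mpr fun hτ => ?_
        have := Subgroup.mem_iInf.mp (Subgroup.mem_iInf.mp hx (τ * σ)) (mul_mem hτ hσ)
        exact this
      have := (mem_ker_rightCosetRep H (σ x)).mpr (hcore hσx)
      rwa [MonoidHom.mem_ker] at this
    · intro x hx
      refine Subgroup.mem_iInf.mpr fun σ => Subgroup.mem_iInf.mpr fun hσ => ?_
      have := Subgroup.mem_iInf.mp (Subgroup.mem_iInf.mp hx σ) hσ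
      rw [MonoidHom.mem_ker] at this
      change (rightCosetRep H) (σ x) = 1 at this
      have hmem : σ x ∈ (rightCosetRep H).ker := this
      exact H.normalCore_le ((mem_ker_rightCosetRep H (σ x)).mp hmem)
end

section
/- Let F be a free group of finite rank, H ≤ F a subgroup of finite index, φ : F → Sym(H\F) the permutation representation of F on the right cosets of H, and σ an endomorphism of F. If k > 0 is the minimal positive integer with φ∘σ^k = φ, then there exists a minimal positive integer ℓ with σ^ℓ ⤳_φ id, and this ℓ divides k. -/
/-- `σ ⤳_φ δ`: there is a group homomorphism `π` from the image of `φ ∘ δ` to the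
codomain of `φ` such that `φ ∘ σ = π ∘ (φ ∘ δ)`. -/
def leadsTo {F S : Type*} [Group F] [Group S] (φ : F →* S)
    (σ δ : Monoid.End F) : Prop :=
  ∃ π : (φ.comp (δ : F →* F)).range →* S,
    ∀ g : F, φ (σ g) = π ⟨φ (δ g), ⟨g, rfl⟩⟩

section aux
variable {F S : Type*} [Group F] [Group S] (φ : F →* S)

lemma leadsTo_of_comp_eq {σ : Monoid.End F}
    (h : φ.comp (σ : F →* F) = φ) : leadsTo φ σ 1 := by
  refine ⟨(φ.comp ((1 : Monoid.End F) : F →* F)).range.subtype, fun g => ?_⟩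
  exact DFunLike.congr_fun h g

lemma leadsTo_congr {σ τ : Monoid.End F}
    (h : φ.comp (σ : F →* F) = φ.comp (τ : F →* F)) :
    leadsTo φ σ 1 ↔ leadsTo φ τ 1 := by
  constructor
  · rintro ⟨π, hπ⟩
    exact ⟨π, fun g => by rw [← hπ g]; exact (DFunLike.congr_fun h g).symm⟩
  · rintro ⟨π, hπ⟩
    exact ⟨π, fun g => by rw [← hπ g]; exact DFunLike.congr_fun h g⟩

lemma leadsTo_mul {σ τ : Monoid.End F}
    (hσ : leadsTo φ σ 1) (hτ : leadsTo φ τ 1) : leadsTo φ (σ * τ) 1 := by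
  obtain ⟨πσ, hπσ⟩ := hσ
  obtain ⟨πτ, hπτ⟩ := hτ
  have mem : ∀ x : (φ.comp ((1 : Monoid.End F) : F →* F)).range,
      (πτ x : S) ∈ (φ.comp ((1 : Monoid.End F) : F →* F)).range := by
    rintro ⟨x, g, rfl⟩
    exact ⟨τ g, hπτ g⟩
  refine ⟨πσ.comp
    { toFun := fun x => (⟨πτ x, mem x⟩ : (φ.comp ((1 : Monoid.End F) : F →* F)).range)
      map_one' := by ext; simp
      map_mul' := fun x y => by ext; simp }, fun g => ?_⟩
  show φ (σ (τ g)) = πσ ⟨πτ ⟨φ ((1 : Monoid.End F) g), ⟨g, rfl⟩⟩, _⟩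
  rw [hπσ (τ g)]
  congr 1
  exact Subtype.ext (by simpa using hπτ g)

end aux

section main
variable {F S : Type*} [Group F] [Group S]

theorem main_general (φ : F →* S) (σ : Monoid.End F) (k : ℕ) (hk : 0 < k)
    (hφk : φ.comp ((σ ^ k : Monoid.End F) : F →* F) = φ) :
    ∃ ℓ : ℕ, 0 < ℓ ∧ leadsTo φ (σ ^ ℓ) (1 : Monoid.End F) ∧
      (∀ j : ℕ, 0 < j → leadsTo φ (σ ^ j) (1 : Monoid.End F) → ℓ ≤ j) ∧
      ℓ ∣ k := by
  classical
  have hPk : leadsTo φ (σ ^ k) 1 := leadsTo_of_comp_eq φ hφk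
  have hper : ∀ j : ℕ, φ.comp ((σ ^ (j + k) : Monoid.End F) : F →* F)
      = φ.comp ((σ ^ j : Monoid.End F) : F →* F) := by
    intro j
    ext g
    have h1 : (σ ^ (j + k)) g = (σ ^ k) ((σ ^ j) g) := by
      rw [add_comm, pow_add]; rfl
    show φ ((σ ^ (j + k)) g) = φ ((σ ^ j) g)
    rw [h1]
    exact DFunLike.congr_fun hφk ((σ ^ j) g)
  have hperm : ∀ (b j : ℕ), φ.comp ((σ ^ (j + b * k) : Monoid.End F) : F →* F)
      = φ.comp ((σ ^ j : Monoid.End F) : F →* F) := by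
    intro b
    induction b with
    | zero => intro j; simp
    | succ b ih =>
        intro j
        have e : j + (b + 1) * k = (j + b * k) + k := by ring
        rw [e, hper, ih]
  have hex : ∃ j : ℕ, 0 < j ∧ leadsTo φ (σ ^ j) 1 := ⟨k, hk, hPk⟩
  set ℓ := Nat.find hex with hℓdef
  obtain ⟨hℓpos, hℓlead⟩ := Nat.find_spec hex
  have hmin : ∀ j : ℕ, 0 < j → leadsTo φ (σ ^ j) 1 → ℓ ≤ j :=
    fun j hj hlj => Nat.find_le ⟨hj, hlj⟩
  refine ⟨ℓ, hℓpos, hℓlead, hmin, ?_⟩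
  -- multiples of ℓ lead to 1
  have hsmul : ∀ s : ℕ, leadsTo φ (σ ^ ((s + 1) * ℓ)) 1 := by
    intro s
    induction s with
    | zero => simpa using hℓlead
    | succ s ih =>
        have e : (s + 1 + 1) * ℓ = (s + 1) * ℓ + ℓ := by ring
        rw [e, pow_add]
        exact leadsTo_mul φ ih hℓlead
  -- now show ℓ ∣ k
  set q := k / ℓ with hq
  set r := k % ℓ with hr
  have hqr : ℓ * q + r = k := Nat.div_add_mod k ℓ
  by_cases hr0 : r = 0
  · exact Nat.dvd_of_mod_eq_zero hr0
  · exfalso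
    have hrpos : 0 < r := Nat.pos_of_ne_zero hr0
    have hrlt : r < ℓ := Nat.mod_lt k hℓpos
    have hℓ2 : 2 ≤ ℓ := by
      rcases Nat.lt_or_ge ℓ 2 with h | h
      · interval_cases ℓ <;> omega
      · exact h
    have hqk : q < k := by
      have h1 : q ≤ ℓ * q := Nat.le_mul_of_pos_left q hℓpos
      omega
    have hid : (k - q) * ℓ = r + (ℓ - 1) * k := by
      have hq' : q ≤ k := le_of_lt hqk
      have h1 : 1 ≤ ℓ := hℓpos
      zify [hq', h1]
      have h : (ℓ : ℤ) * q + r = k := by exact_mod_cast hqr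
      linear_combination -h
    have hsk : 1 ≤ k - q := by omega
    have hlead1 : leadsTo φ (σ ^ ((k - q) * ℓ)) 1 := by
      have := hsmul (k - q - 1)
      rwa [show k - q - 1 + 1 = k - q by omega] at this
    have heq : φ.comp ((σ ^ ((k - q) * ℓ) : Monoid.End F) : F →* F)
        = φ.comp ((σ ^ r : Monoid.End F) : F →* F) := by
      rw [hid]
      exact hperm (ℓ - 1) r
    have hleadr : leadsTo φ (σ ^ r) 1 := (leadsTo_congr φ heq).mp hlead1
    exact absurd (hmin r hrpos hleadr) (by omega)

end main

/-- Lemma 5.13(iii): let `H` be a finite index subgroup of a free group `F` of finite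
rank with permutation representation `φ` on the right cosets of `H`, and let `σ` be an
endomorphism of `F`.  If `k > 0` is the minimal positive integer with `φ∘σ^k = φ`,
then there is a minimal positive integer `ℓ` with `σ^ℓ ⤳_φ id`, and `ℓ` divides `k`. -/
theorem minimal_leadsTo_exponent_dvd
    (n : ℕ) (H : Subgroup (FreeGroup (Fin n))) (hHfi : H.FiniteIndex)
    (φ : FreeGroup (Fin n) →* Equiv.Perm (Quotient (QuotientGroup.rightRel H)))
    (hφ : φ = rightCosetRep H)
    (σ : Monoid.End (FreeGroup (Fin n))) (k : ℕ) (hk : 0 < k)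
    (hφk : φ.comp ((σ ^ k : Monoid.End (FreeGroup (Fin n))) :
      FreeGroup (Fin n) →* FreeGroup (Fin n)) = φ)
    (hkmin : ∀ j : ℕ, 0 < j →
      φ.comp ((σ ^ j : Monoid.End (FreeGroup (Fin n))) :
        FreeGroup (Fin n) →* FreeGroup (Fin n)) = φ → k ≤ j) :
    ∃ ℓ : ℕ, 0 < ℓ ∧ leadsTo φ (σ ^ ℓ) (1 : Monoid.End (FreeGroup (Fin n))) ∧
      (∀ j : ℕ, 0 < j → leadsTo φ (σ ^ j) (1 : Monoid.End (FreeGroup (Fin n))) → ℓ ≤ j) ∧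
      ℓ ∣ k := by
  exact main_general φ σ k hk hφk
end
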